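/- Let a, b ∈ ℂ with 0 < |a| < |b|, set m₋ := 1 − conj(b)/conj(a) and m₊ := 1 + conj(b)/conj(a), let w ∈ ℂ satisfy w² = conj(b)/conj(a), and put ζ₀ := (i/2)(w − 1/w). Then ζ₀ ≠ −ζ₀, both ζ₀ and −ζ₀ lie in Ω := ℂ ∖ [−1,1], and {ζ ∈ Ω : m₋·f(ζ) + m₊·ζ = 0} = {ζ₀, −ζ₀}. -/

import Mathlib

/-- The slit `[-1,1]`: complex numbers with zero imaginary part and real part in `[-1,1]`. -/
def slit : Set ℂ := {z : ℂ | z.im = 0 ∧ -1 ≤ z.re ∧ z.re ≤ 1}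

/-- The cut plane `Ω = ℂ ∖ [-1,1]`. -/
def Omg : Set ℂ := slitᶜ

/-- The branch `f(ζ) = ζ·(1 − ζ⁻²)^{1/2}` of `(ζ² − 1)^{1/2}` with `f(ζ) ~ ζ` at infinity. -/
noncomputable def fbr (ζ : ℂ) : ℂ := ζ * (1 - ζ⁻¹ ^ 2) ^ ((1 : ℂ) / 2)

lemma fbr_neg (ζ : ℂ) : fbr (-ζ) = - fbr ζ := by
  unfold fbr; rw [inv_neg, neg_sq]; ring

lemma fbr_sq {ζ : ℂ} (hζ : ζ ≠ 0) : fbr ζ ^ 2 = ζ ^ 2 - 1 := by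
  unfold fbr
  rw [mul_pow]
  by_cases h : (1 - ζ⁻¹ ^ 2) = 0
  · rw [h]
    simp only [Complex.zero_cpow (by norm_num : (1:ℂ)/2 ≠ 0)]
    have : ζ ^ 2 = 1 := by field_simp at h; linear_combination h
    rw [this]; ring
  · have : ((1 - ζ⁻¹ ^ 2) ^ ((1:ℂ)/2)) ^ 2 = 1 - ζ⁻¹ ^ 2 := by
      rw [sq, ← Complex.cpow_add _ _ h]
      norm_num
    rw [this]
    field_simp

lemma cpow_half_sq {c : ℂ} (hc : 0 < c.re) : (c ^ 2) ^ ((1 : ℂ)/2) = c := by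
  have := Complex.sq_cpow_two_inv hc
  rw [one_div]
  norm_num at this ⊢
  exact this

/-- Key slit computation: `ζ₀ = (i/2)(w - 1/w)` is not on the slit when `|w| > 1`. -/
lemma zeta_not_slit {w : ℂ} (hns1 : 1 < Complex.normSq w) :
    Complex.I / 2 * (w - 1 / w) ∉ slit := by
  rintro ⟨him, hre1, hre2⟩
  have hns0 : (0:ℝ) < Complex.normSq w := by linarith
  have hire : (Complex.I / 2 * (w - 1 / w)).im = (w.re - w.re / Complex.normSq w) / 2 := by
    simp [Complex.mul_im, Complex.div_im, Complex.div_re, Complex.inv_re, Complex.inv_im,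
      Complex.one_re, Complex.one_im, Complex.I_re, Complex.I_im, Complex.sub_re, Complex.sub_im]
    ring
  have hrre : (Complex.I / 2 * (w - 1 / w)).re = -(w.im + w.im / Complex.normSq w) / 2 := by
    simp [Complex.mul_re, Complex.div_im, Complex.div_re, Complex.inv_re, Complex.inv_im,
      Complex.one_re, Complex.one_im, Complex.I_re, Complex.I_im, Complex.sub_re, Complex.sub_im]
    ring
  rw [hire] at him
  rw [hrre] at hre1 hre2
  have hwre : w.re = 0 := by
    have h1 : w.re * (1 - 1 / Complex.normSq w) = 0 := by
      field_simp at him ⊢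
      linarith [him]
    rcases mul_eq_zero.mp h1 with h | h
    · exact h
    · exfalso
      have : (1:ℝ) / Complex.normSq w < 1 := by
        rw [div_lt_one hns0]; linarith
      linarith
  have hnsq : Complex.normSq w = w.im ^ 2 := by
    rw [Complex.normSq_apply, hwre]; ring
  rw [hnsq] at hre1 hre2 hns1
  set t := w.im with ht
  have ht0 : t ≠ 0 := by intro h; rw [h] at hns1; norm_num at hns1
  have h2 : t ^ 2 > 1 := hns1
  rcases lt_or_gt_of_ne ht0 with hneg | hpos
  · have h5 : t * 1 ≤ t * (-(t + t / t ^ 2) / 2) := by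
      apply mul_le_mul_of_nonpos_left hre2 hneg.le
    have h6 : t * (-(t + t / t ^ 2) / 2) = -(t^2 + 1)/2 := by field_simp
    rw [h6] at h5
    have h3 : t ^ 2 + 1 ≤ -2 * t := by linarith
    have ht1 : t < -1 := by nlinarith
    nlinarith [mul_pos (show (0:ℝ) < -t - 1 by linarith) (show (0:ℝ) < -t - 1 by linarith)]
  · have h5 : t * (-1) ≤ t * (-(t + t / t ^ 2) / 2) := by
      apply mul_le_mul_of_nonneg_left hre1 hpos.le
    have h6 : t * (-(t + t / t ^ 2) / 2) = -(t^2 + 1)/2 := by field_simp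
    rw [h6] at h5
    have h3 : t ^ 2 + 1 ≤ 2 * t := by linarith
    have ht1 : 1 < t := by nlinarith
    nlinarith [mul_pos (show (0:ℝ) < t - 1 by linarith) (show (0:ℝ) < t - 1 by linarith)]

/-- When `0 < |a| < |b|`, the function `η(ζ) = m₋ f(ζ) + m₊ ζ` has exactly the two distinct
zeros `±ζ₀`, `ζ₀ = (i/2)(w − 1/w)` with `w² = conj b / conj a`, in the cut plane `Ω`. -/
theorem stmt_7 (a b : ℂ) (ha : 0 < ‖a‖) (hab : ‖a‖ < ‖b‖)
    (w : ℂ) (hw : w ^ 2 = (starRingEnd ℂ) b / (starRingEnd ℂ) a)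
    (ζ₀ : ℂ) (hζ₀ : ζ₀ = Complex.I / 2 * (w - 1 / w)) :
    ζ₀ ≠ -ζ₀ ∧ ζ₀ ∈ Omg ∧ -ζ₀ ∈ Omg ∧
    {ζ : ℂ | ζ ∈ Omg ∧
        (1 - (starRingEnd ℂ) b / (starRingEnd ℂ) a) * fbr ζ +
          (1 + (starRingEnd ℂ) b / (starRingEnd ℂ) a) * ζ = 0} = {ζ₀, -ζ₀} := by
  set μ : ℂ := (starRingEnd ℂ) b / (starRingEnd ℂ) a with hμdef
  -- basic facts
  have hμabs : 1 < ‖μ‖ := by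
    rw [hμdef, norm_div, Complex.norm_conj, Complex.norm_conj, one_lt_div ha]
    exact hab
  have hμ0 : μ ≠ 0 := by
    intro h; rw [h] at hμabs; norm_num at hμabs
  have hw0 : w ≠ 0 := by
    intro h; rw [h] at hw; simp at hw; exact hμ0 hw.symm
  have hns : Complex.normSq w = ‖μ‖ := by
    rw [← hw, ← Complex.sq_norm, norm_pow]
  have hns1 : 1 < Complex.normSq w := hns ▸ hμabs
  have hμ1 : μ ≠ 1 := by intro h; rw [h] at hμabs; norm_num at hμabs
  have hμm1 : μ ≠ -1 := by intro h; rw [h] at hμabs; norm_num at hμabs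
  have hw21 : w ^ 2 - 1 ≠ 0 := by
    intro h; apply hμ1; rw [← hw]; linear_combination h
  have hw2p1 : w ^ 2 + 1 ≠ 0 := by
    intro h; apply hμm1; rw [← hw]; linear_combination h
  -- ζ₀ ≠ 0
  have hζ0ne : ζ₀ ≠ 0 := by
    rw [hζ₀]
    intro h
    apply hw21
    have hI : Complex.I ≠ 0 := Complex.I_ne_zero
    field_simp at h
    rw [mul_zero] at h
    rcases mul_eq_zero.mp h with h | h
    · exact absurd h hI
    · linear_combination h
  -- ζ₀² via w
  have hζsq : ζ₀ ^ 2 * (4 * w ^ 2) = - (w ^ 2 - 1) ^ 2 := by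
    rw [hζ₀, mul_pow, div_pow, Complex.I_sq]
    field_simp
    ring
  -- Omg membership
  have hmem : ζ₀ ∈ Omg := hζ₀ ▸ zeta_not_slit hns1
  have hmemn : -ζ₀ ∈ Omg := by
    intro hs
    obtain ⟨h1, h2, h3⟩ := hs
    apply hmem
    refine ⟨neg_eq_zero.mp ?_, ?_, ?_⟩
    · simpa using h1
    · simp only [Complex.neg_re] at h2 h3; linarith
    · simp only [Complex.neg_re] at h2 h3; linarith
  -- the branch value at ζ₀
  set c : ℂ := (w ^ 2 + 1) / (w ^ 2 - 1) with hcdef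
  have hcre : 0 < c.re := by
    have hpos : 0 < Complex.normSq (w ^ 2 - 1) := by
      rwa [Complex.normSq_pos]
    have hcval : c.re = (Complex.normSq (w ^ 2) - 1) / Complex.normSq (w ^ 2 - 1) := by
      rw [hcdef, Complex.div_re]
      simp only [Complex.add_re, Complex.add_im, Complex.sub_re, Complex.sub_im,
        Complex.one_re, Complex.one_im, Complex.normSq_apply]
      ring
    rw [hcval]
    apply div_pos _ hpos
    rw [map_pow]
    nlinarith
  have hc2 : 1 - ζ₀⁻¹ ^ 2 = c ^ 2 := by
    rw [hcdef]
    field_simp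
    linear_combination -hζsq
  have hfb : fbr ζ₀ = ζ₀ * c := by
    unfold fbr
    rw [hc2, cpow_half_sq hcre]
  -- η(ζ₀) = 0
  have hη0 : (1 - μ) * fbr ζ₀ + (1 + μ) * ζ₀ = 0 := by
    rw [hfb, ← hw, hcdef]
    field_simp
    ring
  have hη0n : (1 - μ) * fbr (-ζ₀) + (1 + μ) * (-ζ₀) = 0 := by
    rw [fbr_neg]
    linear_combination -hη0
  refine ⟨?_, hmem, hmemn, ?_⟩
  · intro h
    apply hζ0ne
    have : (2:ℂ) * ζ₀ = 0 := by linear_combination h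
    simpa using this
  · ext ζ
    simp only [Set.mem_setOf_eq, Set.mem_insert_iff, Set.mem_singleton_iff]
    constructor
    · rintro ⟨hΩ, hz⟩
      have hζne : ζ ≠ 0 := by
        intro h
        exact hΩ (h ▸ ⟨Complex.zero_im, by norm_num, by norm_num⟩)
      have hsq := fbr_sq hζne
      have h2 : (1 - μ) ^ 2 * fbr ζ ^ 2 = (1 + μ) ^ 2 * ζ ^ 2 := by
        linear_combination ((1 - μ) * fbr ζ - (1 + μ) * ζ) * hz
      have h3 : ζ ^ 2 * (4 * μ) = -(1 - μ) ^ 2 := by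
        linear_combination (-1 : ℂ) * h2 + (1 - μ)^2 * hsq
      have hζsq' : ζ₀ ^ 2 * (4 * μ) = -(1 - μ) ^ 2 := by
        rw [← hw]; linear_combination hζsq
      have h4 : ζ ^ 2 = ζ₀ ^ 2 := by
        have h5 : ζ ^ 2 * (4 * μ) = ζ₀ ^ 2 * (4 * μ) := h3.trans hζsq'.symm
        exact mul_right_cancel₀ (by simp [hμ0]) h5
      have h6 : (ζ - ζ₀) * (ζ + ζ₀) = 0 := by linear_combination h4
      rcases mul_eq_zero.mp h6 with h | h
      · left; linear_combination h
      · right; linear_combination h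
    · rintro (rfl | rfl)
      · exact ⟨hmem, hη0⟩
      · exact ⟨hmemn, hη0n⟩
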